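/- Let f : ℝ^n → ℝ^n be continuously differentiable with global flow φ, let h : ℝ^n → ℝ be continuously differentiable, let M ⊆ ℝ^n be closed, and set D := {x ∈ ℝ^n : h(x) = 0 and ⟨∇h(x), f(x)⟩ ≤ 0}. For x ∈ ℝ^n define the time-to-impact T_I(x) := inf{t ≥ 0 : φ(t,x) ∈ D} ∈ [0,∞]. Assume ⟨∇h(x), f(x)⟩ < 0 for every x ∈ M ∩ D. Let x* ∈ ℝ^n be such that 0 < T_I(x*) < ∞, h(φ(t,x*)) > 0 for every t ∈ [0, T_I(x*)), φ(t,x*) ∈ M for every t ∈ [0, T_I(x*)], and φ(T_I(x*), x*) ∈ M ∩ D. Then T_I is continuous at x*: for every ε > 0 there exists δ > 0 such that every x ∈ ℝ^n with |x − x*| < δ satisfies T_I(x) < ∞ and |T_I(x) − T_I(x*)| < ε. -/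

import Mathlib

open Set Metric RealInnerProductSpace

set_option maxHeartbeats 1000000 in
/-- Continuity of the time-to-impact function at a point `xstar` where the impact
time is positive and finite, the flow stays in `{h > 0}` before impact, remains in `M`,
and ends in `M ∩ D`, assuming transversality `⟪∇h, f⟫ < 0` on `M ∩ D`. -/
theorem stmt_0 (n : ℕ) (hn : 1 ≤ n)
    (f : EuclideanSpace ℝ (Fin n) → EuclideanSpace ℝ (Fin n))
    (hf : ContDiff ℝ 1 f)
    (φ : ℝ → EuclideanSpace ℝ (Fin n) → EuclideanSpace ℝ (Fin n))
    (hφ0 : ∀ x, φ 0 x = x)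
    (hφ' : ∀ (t : ℝ) (x : EuclideanSpace ℝ (Fin n)),
      HasDerivAt (fun s => φ s x) (f (φ t x)) t)
    (h : EuclideanSpace ℝ (Fin n) → ℝ) (hh : ContDiff ℝ 1 h)
    (M : Set (EuclideanSpace ℝ (Fin n))) (hM : IsClosed M)
    (D : Set (EuclideanSpace ℝ (Fin n)))
    (hD : D = {x | h x = 0 ∧ ⟪gradient h x, f x⟫ ≤ 0})
    (htrans : ∀ x ∈ M ∩ D, ⟪gradient h x, f x⟫ < 0)
    (xstar : EuclideanSpace ℝ (Fin n))
    (hne : {t : ℝ | 0 ≤ t ∧ φ t xstar ∈ D}.Nonempty)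
    (hpos : 0 < sInf {t : ℝ | 0 ≤ t ∧ φ t xstar ∈ D})
    (hflowpos : ∀ t ∈ Ico (0:ℝ) (sInf {t : ℝ | 0 ≤ t ∧ φ t xstar ∈ D}),
      0 < h (φ t xstar))
    (hflowM : ∀ t ∈ Icc (0:ℝ) (sInf {t : ℝ | 0 ≤ t ∧ φ t xstar ∈ D}),
      φ t xstar ∈ M)
    (hendMD : φ (sInf {t : ℝ | 0 ≤ t ∧ φ t xstar ∈ D}) xstar ∈ M ∩ D) :
    ∀ ε > 0, ∃ δ > 0, ∀ x : EuclideanSpace ℝ (Fin n), ‖x - xstar‖ < δ →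
      {t : ℝ | 0 ≤ t ∧ φ t x ∈ D}.Nonempty ∧
      |sInf {t : ℝ | 0 ≤ t ∧ φ t x ∈ D} -
        sInf {t : ℝ | 0 ≤ t ∧ φ t xstar ∈ D}| < ε := by
  intro ε hε
  set T := sInf {t : ℝ | 0 ≤ t ∧ φ t xstar ∈ D} with hTdef
  -- basic continuity facts
  have hφcont : ∀ x, Continuous (fun t => φ t x) := by
    intro x
    have : Differentiable ℝ (fun s => φ s x) := fun t => (hφ' t x).differentiableAt
    exact this.continuous
  have hhc : Continuous h := hh.continuous
  set G : EuclideanSpace ℝ (Fin n) → ℝ := fun y => ⟪gradient h y, f y⟫ with hGdef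
  have hGgrad : Continuous (gradient h) := by
    have : Continuous (fderiv ℝ h) := hh.continuous_fderiv one_ne_zero
    exact (LinearIsometryEquiv.continuous _).comp this
  have hGc : Continuous G := (hGgrad.inner hf.continuous)
  have hderiv : ∀ x t, HasDerivAt (fun s => h (φ s x)) (G (φ t x)) t := by
    intro x t
    have hg : HasGradientAt h (gradient h (φ t x)) (φ t x) :=
      (hh.differentiable one_ne_zero (φ t x)).hasGradientAt
    have := hg.hasFDerivAt.comp_hasDerivAt t (hφ' t x)
    exact this
  set p := φ T xstar with hpdef
  have hpMD : p ∈ M ∩ D := hendMD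
  have hc0 : G p < 0 := htrans p hpMD
  have hp0 : h p = 0 := by
    have := hpMD.2
    rw [hD] at this
    exact this.1
  -- radius r around p where G < 0
  obtain ⟨r', hr'0, hball⟩ := Metric.isOpen_iff.1 (isOpen_lt hGc continuous_const) p hc0
  set r := r'/2 with hrdef
  have hr0 : 0 < r := by positivity
  have hr : ∀ y : EuclideanSpace ℝ (Fin n), dist y p ≤ r → G y < 0 := by
    intro y hy
    exact hball (lt_of_le_of_lt hy (by simp [hrdef]; linarith))
  -- choice of σ
  have hev1 : ∀ᶠ t in nhdsWithin T (Ioi T), h (φ t xstar) < 0 := by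
    have hs := hasDerivAt_iff_tendsto_slope.1 (hderiv xstar T)
    have hs' : Filter.Tendsto (slope (fun s => h (φ s xstar)) T)
        (nhdsWithin T (Ioi T)) (nhds (G p)) :=
      hs.mono_left (nhdsWithin_mono _ (fun t ht => ne_of_gt ht))
    have hev := hs'.eventually_lt_const hc0 |>.and self_mem_nhdsWithin
    refine hev.mono ?_
    rintro t ⟨hlt, (ht : T < t)⟩
    have hslope : slope (fun s => h (φ s xstar)) T t = (h (φ t xstar) - h p) / (t - T) := by
      simp [slope_def_field, hpdef]
    rw [hslope, hp0, sub_zero] at hlt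
    have := mul_neg_of_neg_of_pos hlt (sub_pos.2 ht)
    rw [div_mul_cancel₀] at this
    · linarith
    · exact ne_of_gt (sub_pos.2 ht)
  have hev2 : ∀ᶠ t in nhds T, dist (φ t xstar) p < r/2 := by
    have := (hφcont xstar).continuousAt (x := T)
    exact (Metric.tendsto_nhds.mp this.tendsto) (r/2) (by positivity)
  obtain ⟨ι, hι0, hι⟩ := Metric.eventually_nhds_iff.1 hev2
  obtain ⟨ι₂, hι₂0, hι₂⟩ := Metric.eventually_nhds_iff.1 (eventually_nhdsWithin_iff.1 hev1)
  set σ := min (min (ι/2) (ι₂/2)) (min (ε/2) (T/2)) with hσdef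
  have hσ0 : 0 < σ := by
    apply lt_min (lt_min (by positivity) (by positivity)) (lt_min (by positivity) (by positivity))
  have hσε : σ < ε := lt_of_le_of_lt ((min_le_right _ _).trans (min_le_left _ _)) (by linarith)
  have hσT : σ < T := lt_of_le_of_lt ((min_le_right _ _).trans (min_le_right _ _)) (by linarith)
  have hσι : σ < ι := lt_of_le_of_lt ((min_le_left _ _).trans (min_le_left _ _)) (by linarith)
  have hσι₂ : σ < ι₂ := lt_of_le_of_lt ((min_le_left _ _).trans (min_le_right _ _)) (by linarith)
  have hnear : ∀ t ∈ Icc (T-σ) (T+σ), dist (φ t xstar) p < r/2 := by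
    intro t ht
    apply hι
    rw [Real.dist_eq, abs_lt]
    constructor <;> [linarith [ht.1]; linarith [ht.2]]
  have hgneg : h (φ (T+σ) xstar) < 0 := by
    apply hι₂
    · rw [Real.dist_eq]
      rw [abs_of_pos (by linarith : (0:ℝ) < T + σ - T)]
      linarith
    · exact Set.mem_Ioi.2 (by linarith)
  -- b : positive lower bound of h on the trajectory before T-σ
  have hIccne : (Icc (0:ℝ) (T-σ)).Nonempty := ⟨0, le_refl 0, by linarith⟩
  obtain ⟨tb, htb, hminb⟩ := isCompact_Icc.exists_isMinOn hIccne
    ((hhc.comp (hφcont xstar)).continuousOn)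
  set b := h (φ tb xstar) with hbdef
  have hb0 : 0 < b := hflowpos tb ⟨htb.1, lt_of_le_of_lt htb.2 (by linarith)⟩
  have hbmin : ∀ t ∈ Icc (0:ℝ) (T-σ), b ≤ h (φ t xstar) := fun t ht => hminb ht
  set a := -h (φ (T+σ) xstar) with hadef
  have ha0 : 0 < a := by simp [hadef]; linarith
  -- compact tube around the trajectory
  set K : Set (EuclideanSpace ℝ (Fin n)) := (fun t => φ t xstar) '' Icc 0 (T+σ) with hKdef
  have hKcomp : IsCompact K := isCompact_Icc.image (hφcont xstar)
  obtain ⟨R₀, hR₀⟩ := hKcomp.isBounded.subset_closedBall 0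
  set B : Set (EuclideanSpace ℝ (Fin n)) := closedBall 0 (R₀+2) with hBdef
  have hBcomp : IsCompact B := isCompact_closedBall 0 (R₀+2)
  have hKB : K ⊆ B := hR₀.trans (closedBall_subset_closedBall (by linarith))
  have hmemK : ∀ t ∈ Icc (0:ℝ) (T+σ), φ t xstar ∈ K := fun t ht => ⟨t, ht, rfl⟩
  have hKnorm : ∀ y ∈ K, ‖y‖ ≤ R₀ := fun y hy => mem_closedBall_zero_iff.1 (hR₀ hy)
  -- Lipschitz constant for f on B
  obtain ⟨C, hC⟩ := hBcomp.exists_bound_of_continuousOn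
    ((hf.continuous_fderiv one_ne_zero).continuousOn)
  set L : NNReal := ⟨max C 0, le_max_right _ _⟩ with hLdef
  have hLip : LipschitzOnWith L f B := by
    apply Convex.lipschitzOnWith_of_nnnorm_fderiv_le
      (fun y _ => hf.differentiable one_ne_zero y) ?_ (convex_closedBall _ _)
    intro y hy
    have : ‖fderiv ℝ f y‖ ≤ max C 0 := (hC y hy).trans (le_max_left _ _)
    exact_mod_cast this
  -- uniform continuity of h on B
  obtain ⟨ρ₁, hρ₁0, hρ₁⟩ := Metric.uniformContinuousOn_iff.1
    (hBcomp.uniformContinuousOn_of_continuous hhc.continuousOn) (min a b) (lt_min ha0 hb0)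
  set ρ := min (min ρ₁ 1) (r/2) with hρdef
  have hρ0 : 0 < ρ := lt_min (lt_min hρ₁0 one_pos) (by positivity)
  have hρ1 : ρ ≤ ρ₁ := (min_le_left _ _).trans (min_le_left _ _)
  have hρle1 : ρ ≤ 1 := (min_le_left _ _).trans (min_le_right _ _)
  have hρr : ρ ≤ r/2 := min_le_right _ _
  set E := Real.exp (L * (T+σ)) with hEdef
  have hE1 : 1 ≤ E := Real.one_le_exp (mul_nonneg L.coe_nonneg (by linarith))
  set δ := ρ / (2*E) with hδdef
  have hδ0 : 0 < δ := by positivity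
  have hδE : δ * E = ρ/2 := by
    rw [hδdef]
    field_simp
  have hδρ : δ < ρ := by
    calc δ = ρ/(2*E) := rfl
    _ ≤ ρ/2 := by
        apply div_le_div_of_nonneg_left hρ0.le (by norm_num) (by nlinarith)
    _ < ρ := by linarith
  refine ⟨δ, hδ0, ?_⟩
  intro x hx
  have hd0 : dist (φ 0 x) (φ 0 xstar) < δ := by
    rw [hφ0, hφ0, dist_eq_norm]; exact hx
  have hxB : ∀ t ∈ Icc (0:ℝ) (T+σ), dist (φ t x) (φ t xstar) ≤ ρ → φ t x ∈ B := by
    intro t ht hd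
    have h1 : ‖φ t xstar‖ ≤ R₀ := hKnorm _ (hmemK t ht)
    have h2 : ‖φ t x‖ - ‖φ t xstar‖ ≤ dist (φ t x) (φ t xstar) := by
      rw [dist_eq_norm]; exact norm_sub_norm_le _ _
    exact mem_closedBall_zero_iff.2 (by linarith)
  have gron : ∀ τ, 0 ≤ τ → τ ≤ T+σ → (∀ s ∈ Icc (0:ℝ) τ, dist (φ s x) (φ s xstar) ≤ ρ) →
      ∀ t ∈ Icc (0:ℝ) τ, dist (φ t x) (φ t xstar) ≤ ρ/2 := by
    intro τ hτ0 hτub hclose t ht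
    have hsub : Icc (0:ℝ) τ ⊆ Icc (0:ℝ) (T+σ) := Icc_subset_Icc le_rfl hτub
    have := dist_le_of_trajectories_ODE_of_mem
      (v := fun _ y => f y) (s := fun _ => B) (K := L) (fun _ _ => hLip)
      ((hφcont x).continuousOn)
      (fun s _ => (hφ' s x).hasDerivWithinAt)
      (fun s hs => hxB s (hsub (Ico_subset_Icc_self hs)) (hclose s (Ico_subset_Icc_self hs)))
      ((hφcont xstar).continuousOn)
      (fun s _ => (hφ' s xstar).hasDerivWithinAt)
      (fun s hs => hKB (hmemK s (hsub (Ico_subset_Icc_self hs))))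
      hd0.le t ht
    calc dist (φ t x) (φ t xstar) ≤ δ * Real.exp (L * (t - 0)) := this
    _ ≤ δ * E := by
        apply mul_le_mul_of_nonneg_left _ hδ0.le
        apply Real.exp_le_exp.2
        apply mul_le_mul_of_nonneg_left _ L.coe_nonneg
        simpa using ht.2.trans hτub
    _ = ρ/2 := hδE
  have key : ∀ t ∈ Icc (0:ℝ) (T+σ), dist (φ t x) (φ t xstar) ≤ ρ/2 := by
    set A : Set ℝ := {τ | τ ∈ Icc (0:ℝ) (T+σ) ∧
      ∀ s ∈ Icc (0:ℝ) τ, dist (φ s x) (φ s xstar) ≤ ρ} with hAdef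
    have hA0 : (0:ℝ) ∈ A := by
      refine ⟨⟨le_rfl, by linarith⟩, ?_⟩
      intro s hs
      have : s = 0 := le_antisymm hs.2 hs.1
      rw [this]; linarith
    have hAbdd : BddAbove A := ⟨T+σ, fun t ht => ht.1.2⟩
    set τs := sSup A with hτsdef
    have hτub : τs ≤ T+σ := csSup_le ⟨0, hA0⟩ (fun t ht => ht.1.2)
    have hτ0 : 0 ≤ τs := le_csSup hAbdd hA0
    have hAlt : ∀ s, 0 ≤ s → s < τs → dist (φ s x) (φ s xstar) ≤ ρ := by
      intro s hs0 hsτ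
      obtain ⟨t, htA, hst⟩ := exists_lt_of_lt_csSup ⟨0, hA0⟩ hsτ
      exact htA.2 s ⟨hs0, hst.le⟩
    have dcont : Continuous (fun s => dist (φ s x) (φ s xstar)) :=
      (hφcont x).dist (hφcont xstar)
    have hdτ : dist (φ τs x) (φ τs xstar) ≤ ρ := by
      rcases eq_or_lt_of_le hτ0 with h0 | h0
      · rw [← h0, hφ0, hφ0, dist_eq_norm]
        exact le_of_lt (lt_trans hx hδρ)
      · have hcl : IsClosed {u : ℝ | dist (φ u x) (φ u xstar) ≤ ρ} :=
          isClosed_le dcont continuous_const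
        have hsub2 : Ico (0:ℝ) τs ⊆ {u : ℝ | dist (φ u x) (φ u xstar) ≤ ρ} :=
          fun u hu => hAlt u hu.1 hu.2
        have hmem : τs ∈ closure (Ico (0:ℝ) τs) := by
          rw [closure_Ico (ne_of_lt h0)]
          exact ⟨h0.le, le_rfl⟩
        exact hcl.closure_subset (closure_mono hsub2 hmem)
    have hτA : τs ∈ A := by
      refine ⟨⟨hτ0, hτub⟩, ?_⟩
      intro s hs
      rcases eq_or_lt_of_le hs.2 with heq | hlt
      · rw [heq]; exact hdτ
      · exact hAlt s hs.1 hlt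
    have hτeq : τs = T+σ := by
      by_contra hne'
      have hτlt : τs < T+σ := lt_of_le_of_ne hτub hne'
      have hgr := gron τs hτ0 hτub hτA.2 τs ⟨hτ0, le_rfl⟩
      have hstrict : dist (φ τs x) (φ τs xstar) < ρ := lt_of_le_of_lt hgr (by linarith)
      have hopen := (isOpen_lt dcont continuous_const).mem_nhds
        (show dist (φ τs x) (φ τs xstar) < ρ from hstrict)
      obtain ⟨ι₃, hι₃0, hι₃⟩ := Metric.mem_nhds_iff.1 hopen
      set τ' := min (τs + ι₃/2) (T+σ) with hτ'def
      have hτ'gt : τs < τ' := lt_min (by linarith) hτlt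
      have hτ'A : τ' ∈ A := by
        refine ⟨⟨by linarith, min_le_right _ _⟩, ?_⟩
        intro s hs
        rcases le_or_gt s τs with hle | hgt
        · exact hτA.2 s ⟨hs.1, hle⟩
        · apply le_of_lt
          apply hι₃
          rw [mem_ball, Real.dist_eq, abs_of_pos (by linarith)]
          have : s ≤ τs + ι₃/2 := hs.2.trans (min_le_left _ _)
          linarith
      exact absurd (le_csSup hAbdd hτ'A) (not_le.2 hτ'gt)
    intro t ht
    exact gron (T+σ) (by linarith) le_rfl (hτeq ▸ hτA.2) t ht
  -- both points lie in B; h values are close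
  have hbothB : ∀ t ∈ Icc (0:ℝ) (T+σ), φ t x ∈ B ∧ φ t xstar ∈ B := by
    intro t ht
    exact ⟨hxB t ht ((key t ht).trans (by linarith)), hKB (hmemK t ht)⟩
  have hhclose : ∀ t ∈ Icc (0:ℝ) (T+σ), |h (φ t x) - h (φ t xstar)| < min a b := by
    intro t ht
    have hlt : dist (φ t x) (φ t xstar) < ρ₁ :=
      lt_of_le_of_lt (key t ht) (by linarith)
    have := hρ₁ _ (hbothB t ht).1 _ (hbothB t ht).2 hlt
    rwa [Real.dist_eq] at this
  -- h positive on [0, T-σ] for the perturbed trajectory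
  have hpos' : ∀ t ∈ Icc (0:ℝ) (T-σ), 0 < h (φ t x) := by
    intro t ht
    have ht' : t ∈ Icc (0:ℝ) (T+σ) := ⟨ht.1, ht.2.trans (by linarith)⟩
    have h1 := hhclose t ht'
    have h2 := hbmin t ht
    have h3 : min a b ≤ b := min_le_right _ _
    have := abs_lt.1 h1
    linarith
  -- h negative at T+σ for the perturbed trajectory
  have hneg' : h (φ (T+σ) x) < 0 := by
    have ht' : (T+σ) ∈ Icc (0:ℝ) (T+σ) := ⟨by linarith, le_rfl⟩
    have h1 := hhclose (T+σ) ht'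
    have h3 : min a b ≤ a := min_le_left _ _
    have := abs_lt.1 h1
    have ha' : h (φ (T+σ) xstar) = -a := by rw [hadef]; ring
    linarith [ha' ▸ this.2]
  -- intermediate value theorem gives impact time t₀
  have hivt : (0:ℝ) ∈ (fun t => h (φ t x)) '' Icc (T-σ) (T+σ) := by
    apply intermediate_value_Icc' (by linarith : T-σ ≤ T+σ)
      ((hhc.comp (hφcont x)).continuousOn)
    constructor
    · exact hneg'.le
    · exact (hpos' (T-σ) ⟨by linarith, le_rfl⟩).le
  obtain ⟨t₀, ht₀mem, ht₀⟩ := hivt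
  have ht₀0 : 0 ≤ t₀ := le_trans (by linarith : (0:ℝ) ≤ T-σ) ht₀mem.1
  have ht₀D : φ t₀ x ∈ D := by
    rw [hD]
    refine ⟨ht₀, ?_⟩
    have hdp : dist (φ t₀ x) p < r := by
      have h1 : dist (φ t₀ x) (φ t₀ xstar) ≤ ρ/2 :=
        key t₀ ⟨ht₀0, ht₀mem.2⟩
      have h2 : dist (φ t₀ xstar) p < r/2 := hnear t₀ ht₀mem
      calc dist (φ t₀ x) p ≤ dist (φ t₀ x) (φ t₀ xstar) + dist (φ t₀ xstar) p :=
            dist_triangle _ _ _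
      _ < ρ/2 + r/2 := by linarith
      _ ≤ r := by linarith
    exact (hr _ hdp.le).le
  have hSne : {t : ℝ | 0 ≤ t ∧ φ t x ∈ D}.Nonempty := ⟨t₀, ht₀0, ht₀D⟩
  refine ⟨hSne, ?_⟩
  have hbdd : BddBelow {t : ℝ | 0 ≤ t ∧ φ t x ∈ D} := ⟨0, fun t ht => ht.1⟩
  have hle : sInf {t : ℝ | 0 ≤ t ∧ φ t x ∈ D} ≤ T+σ :=
    le_trans (csInf_le hbdd ⟨ht₀0, ht₀D⟩) ht₀mem.2
  have hge : T-σ ≤ sInf {t : ℝ | 0 ≤ t ∧ φ t x ∈ D} := by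
    apply le_csInf hSne
    intro t ht
    by_contra hcon
    push_neg at hcon
    have htI : t ∈ Icc (0:ℝ) (T-σ) := ⟨ht.1, hcon.le⟩
    have := hpos' t htI
    have ht2 := ht.2
    rw [hD] at ht2
    linarith [ht2.1]
  rw [abs_lt]
  constructor <;> linarith
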